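/- Let F_q be a finite field, m ≥ 1, and 1 ≤ d ≤ m(q-1)+1. Then the dimension of PRM_q(d,m) equals Σ_{i=0}^{m} ρ_q(d−1, i), where ρ_q(ν,i) is the number of tuples (a_1,…,a_i) of integers with 0 ≤ a_j ≤ q−1 and a_1+⋯+a_i ≤ ν (with ρ_q(ν,0) = 1 for ν ≥ 0). -/

import Mathlib

/-- `v` is the standard representative of a point of projective space:
its last nonzero coordinate equals `1`. -/
def IsRep {K : Type} [Field K] {n : ℕ} (v : Fin n → K) : Prop :=
  ∃ i, v i = 1 ∧ ∀ j, i < j → v j = 0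

instance {K : Type} [Field K] [DecidableEq K] {n : ℕ} (v : Fin n → K) :
    Decidable (IsRep v) := by unfold IsRep; infer_instance

open Finset MvPolynomial

namespace PRMaux

variable {K : Type} [Field K] [Fintype K]

lemma pow_congr_mod (s t : ℕ) (hs : s ≠ 0) (ht : t ≠ 0)
    (h : s % (Fintype.card K - 1) = t % (Fintype.card K - 1)) (x : K) : x ^ s = x ^ t := by
  rcases eq_or_ne x 0 with rfl | hx
  · rw [zero_pow hs, zero_pow ht]
  · have h1 : x ^ (Fintype.card K - 1) = 1 := FiniteField.pow_card_sub_one_eq_one x hx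
    have key : ∀ n : ℕ, x ^ n = x ^ (n % (Fintype.card K - 1)) := fun n => by
      conv_lhs => rw [← Nat.mod_add_div n (Fintype.card K - 1)]
      rw [pow_add, pow_mul, h1, one_pow, mul_one]
    rw [key s, key t, h]

lemma prod_split {M : Type*} [CommMonoid M] (f : ℕ → M) {i n : ℕ} (hin : i < n)
    (hf : ∀ k, i < k → f k = 1) :
    ∏ k ∈ range n, f k = (∏ k ∈ range i, f k) * f i := by
  rw [← Finset.prod_range_mul_prod_Ico f (Nat.succ_le_of_lt hin), Finset.prod_range_succ,
    Finset.prod_eq_one (fun k hk => hf k (Finset.mem_Ico.mp hk).1), mul_one]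

lemma sum_split (f : ℕ → ℕ) {i n : ℕ} (hin : i < n)
    (hf : ∀ k, i < k → f k = 0) :
    ∑ k ∈ range n, f k = (∑ k ∈ range i, f k) + f i := by
  rw [← Finset.sum_range_add_sum_Ico f (Nat.succ_le_of_lt hin), Finset.sum_range_succ,
    Finset.sum_eq_zero (fun k hk => hf k (Finset.mem_Ico.mp hk).1), add_zero]

/-- reduction of an exponent to the range `[0, q-1]` preserving positivity. -/
def red (q t : ℕ) : ℕ := if t = 0 then 0 else (t - 1) % (q - 1) + 1

lemma red_le (q t : ℕ) : red q t ≤ t := by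
  unfold red; split
  · omega
  · have := Nat.mod_le (t - 1) (q - 1); omega

lemma red_lt (q t : ℕ) (hq : 2 ≤ q) : red q t < q := by
  unfold red; split
  · omega
  · have : (t - 1) % (q - 1) < q - 1 := Nat.mod_lt _ (by omega)
    omega

lemma red_modeq (q t : ℕ) : Nat.ModEq (q - 1) (red q t) t := by
  unfold red; split
  · simp_all; rfl
  · rename_i ht
    have h2 : Nat.ModEq (q-1) ((t - 1) % (q - 1) + 1) ((t - 1) + 1) :=
      Nat.ModEq.add_right 1 (Nat.mod_modEq (t-1) (q-1))
    have h3 : t - 1 + 1 = t := by omega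
    rwa [h3] at h2

lemma red_mod (q t : ℕ) : red q t % (q - 1) = t % (q - 1) := red_modeq q t

lemma red_eq_zero_iff (q t : ℕ) : red q t = 0 ↔ t = 0 := by unfold red; split <;> simp_all

lemma red_dvd_sub (q t : ℕ) : (q - 1) ∣ t - red q t :=
  (Nat.modEq_iff_dvd' (red_le q t)).mp (red_modeq q t)


/-- The reduced monomial functions on `K^n` are linearly independent. -/
lemma monIndep (K : Type) [Field K] [Fintype K] (n : ℕ) :
    LinearIndependent K (fun a : Fin n → Fin (Fintype.card K) =>
      (fun w : Fin n → K => ∏ k, w k ^ (a k : ℕ))) := by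
  classical
  rw [Fintype.linearIndependent_iff]
  intro c hc a
  set u : (Fin n → Fin (Fintype.card K)) → (Fin n →₀ ℕ) :=
    fun a => Finsupp.equivFunOnFinite.symm (fun k => (a k : ℕ)) with hu
  have huapp : ∀ (b : Fin n → Fin (Fintype.card K)) (k : Fin n), u b k = (b k : ℕ) := fun b k => rfl
  have hinj : Function.Injective u := by
    intro a b hab
    funext k
    have : (u a) k = (u b) k := by rw [hab]
    rw [huapp, huapp] at this
    exact Fin.val_injective this
  set F : MvPolynomial (Fin n) K := ∑ b : Fin n → Fin (Fintype.card K), monomial (u b) (c b) with hF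
  have hFr : F ∈ restrictDegree (Fin n) K (Fintype.card K - 1) := by
    refine Submodule.sum_mem _ fun b _ => ?_
    rw [mem_restrictDegree]
    intro s hs i
    rw [support_monomial] at hs
    by_cases hcb : c b = 0
    · simp [hcb] at hs
    · rw [if_neg hcb] at hs
      rw [Finset.mem_singleton] at hs
      subst hs
      rw [huapp]
      have := (b i).isLt
      omega
  have hFeval : ∀ v : Fin n → K, eval v F = 0 := by
    intro v
    rw [hF, map_sum]
    have : ∀ b : Fin n → Fin (Fintype.card K), eval v (monomial (u b) (c b)) = c b * ∏ k, v k ^ (b k : ℕ) := by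
      intro b
      rw [eval_monomial, Finsupp.prod_pow]
      simp only [huapp]
    rw [Finset.sum_congr rfl (fun b _ => this b)]
    have h2 := congrFun hc v
    simpa [Finset.sum_apply] using h2
  have hF0 : F = 0 := eq_zero_of_eval_eq_zero (Fin n) K F hFeval hFr
  have hcoeff := congrArg (coeff (u a)) hF0
  rw [hF, coeff_sum, coeff_zero] at hcoeff
  rw [Finset.sum_eq_single a (fun b _ hb => by
      rw [coeff_monomial, if_neg (fun h => hb (hinj h))]) (by simp)] at hcoeff
  rwa [coeff_monomial, if_pos rfl] at hcoeff


/-- Index type for the basis of the projective Reed-Muller code. -/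
abbrev B (q m d : ℕ) : Type :=
  (j : Fin (m+1)) × {a : Fin (j : ℕ) → Fin q // ∑ k, (a k : ℕ) ≤ d - 1}

/-- Sum of the reduced part of the exponents. -/
def Sa {q m d : ℕ} (b : B q m d) : ℕ := ∑ k, (b.2.1 k : ℕ)

/-- Exponent vector attached to an index. -/
def Ee {q m : ℕ} (d : ℕ) (b : B q m d) (t : ℕ) : ℕ :=
  if h : t < (b.1 : ℕ) then (b.2.1 ⟨t, h⟩ : ℕ) else if t = (b.1 : ℕ) then d - Sa b else 0

/-- The candidate basis vectors of the code. -/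
def eF (K : Type) [Field K] (q m d : ℕ) (b : B q m d) :
    {v : Fin (m+1) → K // IsRep v} → K :=
  fun p => ∏ k, p.1 k ^ Ee d b (k : ℕ)

lemma sum_range_Ee {q m d : ℕ} (hd1 : 1 ≤ d) (b : B q m d) :
    ∑ t ∈ range (↑b.1), Ee d b t = Sa b := by
  rw [← Fin.sum_univ_eq_sum_range (fun t => Ee d b t) ↑b.1]
  unfold Sa
  apply Finset.sum_congr rfl
  intro k _
  show Ee d b ↑k = _
  unfold Ee
  rw [dif_pos k.isLt]

lemma Ee_top {q m d : ℕ} (b : B q m d) : Ee d b ↑b.1 = d - Sa b := by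
  unfold Ee; rw [dif_neg (lt_irrefl _), if_pos rfl]

lemma Ee_gt {q m d : ℕ} (b : B q m d) {t : ℕ} (ht : (b.1 : ℕ) < t) : Ee d b t = 0 := by
  unfold Ee; rw [dif_neg (by omega), if_neg (by omega)]

lemma Ee_top_ne_zero {q m d : ℕ} (hd1 : 1 ≤ d) (b : B q m d) : Ee d b ↑b.1 ≠ 0 := by
  rw [Ee_top]
  have := b.2.2
  unfold Sa
  omega

lemma sum_Ee {q m d : ℕ} (hd1 : 1 ≤ d) (b : B q m d) :
    ∑ k : Fin (m+1), Ee d b (k : ℕ) = d := by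
  have hSa : Sa b ≤ d - 1 := b.2.2
  have hj : (b.1 : ℕ) < m + 1 := b.1.isLt
  rw [Fin.sum_univ_eq_sum_range (fun t => Ee d b t) (m+1),
    sum_split _ hj (fun k hk => Ee_gt b hk), sum_range_Ee hd1 b, Ee_top]
  omega

/-- Every monomial of total degree `d` evaluates, on all of `K^{m+1}`, like
`Ee d b` for some index `b`. -/
lemma exists_b (K : Type) [Field K] [Fintype K] {m d : ℕ} (hd1 : 1 ≤ d)
    (u : Fin (m+1) →₀ ℕ) (hdeg : Finsupp.degree u = d) :
    ∃ b : B (Fintype.card K) m d, ∀ v : Fin (m+1) → K,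
      ∏ k, v k ^ u k = ∏ k, v k ^ Ee d b (k : ℕ) := by
  classical
  have hq2 : 2 ≤ Fintype.card K := Fintype.one_lt_card
  set q := Fintype.card K with hq
  -- extension of u to ℕ
  set w : ℕ → ℕ := fun t => if h : t < m+1 then u ⟨t, h⟩ else 0 with hw
  have hwapp : ∀ k : Fin (m+1), u k = w (k : ℕ) := by
    intro k
    simp only [hw, dif_pos k.isLt, Fin.eta]
  have hdeg' : ∑ t ∈ range (m+1), w t = d := by
    rw [← Fin.sum_univ_eq_sum_range w (m+1)]
    rw [← hdeg]
    rw [Finsupp.degree_apply]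
    rw [Finset.sum_subset (Finset.subset_univ u.support)
      (fun x _ hx => Finsupp.notMem_support_iff.mp hx)]
    exact Finset.sum_congr rfl (fun k _ => (hwapp k).symm)
  set s := (range (m+1)).filter (fun t => w t ≠ 0) with hs
  have hsne : s.Nonempty := by
    by_contra hemp
    rw [Finset.not_nonempty_iff_eq_empty] at hemp
    have : ∑ t ∈ range (m+1), w t = 0 := by
      apply Finset.sum_eq_zero
      intro t ht
      by_contra h0
      have : t ∈ s := Finset.mem_filter.mpr ⟨ht, h0⟩
      simp [hemp] at this
    omega
  set j := s.max' hsne with hj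
  have hjmem := s.max'_mem hsne
  have hjm : j < m + 1 := Finset.mem_range.mp (Finset.mem_filter.mp hjmem).1
  have hj0 : w j ≠ 0 := (Finset.mem_filter.mp hjmem).2
  have hjtop : ∀ t, j < t → w t = 0 := by
    intro t ht
    by_cases htm : t < m + 1
    · by_contra h0
      have : t ∈ s := Finset.mem_filter.mpr ⟨Finset.mem_range.mpr htm, h0⟩
      have := s.le_max' t this
      omega
    · simp only [hw, dif_neg htm]
  have hsplit : (∑ t ∈ range j, w t) + w j = d := by
    rw [← sum_split w hjm hjtop]; exact hdeg'
  set a : Fin j → Fin q := fun k => ⟨red q (w k), red_lt q _ hq2⟩ with ha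
  have hSle : ∀ t, red q (w t) ≤ w t := fun t => red_le q _
  have hSaSu : (∑ t ∈ range j, red q (w t)) ≤ ∑ t ∈ range j, w t :=
    Finset.sum_le_sum (fun t _ => hSle t)
  have hSad : (∑ k : Fin j, ((a k : ℕ))) ≤ d - 1 := by
    have heq : (∑ k : Fin j, ((a k : ℕ))) = ∑ t ∈ range j, red q (w t) := by
      rw [← Fin.sum_univ_eq_sum_range (fun t => red q (w t)) j]
    omega
  refine ⟨⟨⟨j, hjm⟩, ⟨a, hSad⟩⟩, ?_⟩
  set b : B q m d := ⟨⟨j, hjm⟩, ⟨a, hSad⟩⟩ with hb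
  have hSab : Sa b = ∑ t ∈ range j, red q (w t) := by
    unfold Sa
    rw [← Fin.sum_univ_eq_sum_range (fun t => red q (w t)) j]
  intro v
  apply Finset.prod_congr rfl
  intro k _
  rw [hwapp k]
  have hkj : (k : ℕ) < j ∨ (k : ℕ) = j ∨ j < (k : ℕ) := by omega
  rcases hkj with hlt | heq | hgt
  · have hE : Ee d b (k : ℕ) = red q (w k) := by
      unfold Ee
      rw [dif_pos hlt]
    rw [hE]
    by_cases h0 : w (k : ℕ) = 0
    · rw [(red_eq_zero_iff q _).mpr h0, h0]
    · exact pow_congr_mod _ _ h0 (fun hr => h0 ((red_eq_zero_iff q _).mp hr))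
        (red_mod q _).symm (v k)
  · have hE : Ee d b (k : ℕ) = d - Sa b := by
      rw [heq]; exact Ee_top b
    rw [hE, heq]
    have hSa1 : Sa b ≤ d - 1 := b.2.2
    have hdvd : (q - 1) ∣ (∑ t ∈ range j, w t) - Sa b := by
      rw [hSab, ← Finset.sum_tsub_distrib _ (fun t _ => hSle t)]
      exact Finset.dvd_sum (fun t _ => red_dvd_sub q (w t))
    obtain ⟨cdvd, hcdvd⟩ := hdvd
    have hrepr : d - Sa b = w j + (q - 1) * cdvd := by omega
    refine pow_congr_mod _ _ hj0 (by omega) ?_ (v k)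
    rw [hrepr, Nat.add_mul_mod_self_left]
  · rw [hjtop _ hgt, Ee_gt b hgt]


lemma eIndep (K : Type) [Field K] [Fintype K] (m d : ℕ) (hd1 : 1 ≤ d) :
    LinearIndependent K (eF K (Fintype.card K) m d) := by
  classical
  rw [Fintype.linearIndependent_iff]
  intro g hg
  suffices H : ∀ i : ℕ, ∀ jf : Fin (m+1), (jf : ℕ) = i →
      ∀ s : {a : Fin (jf : ℕ) → Fin (Fintype.card K) // ∑ k, (a k : ℕ) ≤ d - 1},
        g ⟨jf, s⟩ = 0 by
    intro b
    obtain ⟨jf, s⟩ := b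
    exact H (jf : ℕ) jf rfl s
  intro i
  induction i using Nat.strong_induction_on with
  | _ i IH =>
  intro jf hjf s0
  subst hjf
  have hrep : ∀ w : Fin (jf : ℕ) → K, IsRep (fun k : Fin (m+1) =>
      if h : (k : ℕ) < (jf : ℕ) then w ⟨(k : ℕ), h⟩
      else if (k : ℕ) = (jf : ℕ) then 1 else 0) := by
    intro w
    refine ⟨jf, ?_, ?_⟩
    · show (if h : (jf : ℕ) < (jf : ℕ) then w ⟨(jf : ℕ), h⟩
        else if (jf : ℕ) = (jf : ℕ) then 1 else 0) = 1
      rw [dif_neg (lt_irrefl _), if_pos rfl]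
    · intro k hk
      have hk' : (jf : ℕ) < (k : ℕ) := hk
      show (if h : (k : ℕ) < (jf : ℕ) then w ⟨(k : ℕ), h⟩
        else if (k : ℕ) = (jf : ℕ) then 1 else 0) = 0
      rw [dif_neg (by omega), if_neg (by omega)]
  set ext : (Fin (jf : ℕ) → K) → {v : Fin (m+1) → K // IsRep v} :=
    fun w => ⟨_, hrep w⟩ with hext
  set f : B (Fintype.card K) m d → (Fin (jf : ℕ) → K) → K :=
    fun b w => eF K (Fintype.card K) m d b (ext w) with hf
  have hfsum : ∑ b : B (Fintype.card K) m d, g b • f b = 0 := by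
    funext w
    have h1 := congrFun hg (ext w)
    simpa [Finset.sum_apply] using h1
  have hzero_gt : ∀ b : B (Fintype.card K) m d, (jf : ℕ) < (b.1 : ℕ) → f b = 0 := by
    intro b hb
    funext w
    show eF K (Fintype.card K) m d b (ext w) = 0
    unfold eF
    apply Finset.prod_eq_zero (Finset.mem_univ b.1)
    have hv : (ext w).1 b.1 = 0 := by
      show (if h : ((b.1 : Fin (m+1)) : ℕ) < (jf : ℕ) then _ else _) = (0 : K)
      rw [dif_neg (by omega), if_neg (by omega)]
    rw [hv]
    exact zero_pow (Ee_top_ne_zero hd1 b)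
  have hIH : ∀ b : B (Fintype.card K) m d, (b.1 : ℕ) < (jf : ℕ) → g b = 0 := by
    intro b hb
    obtain ⟨j', s'⟩ := b
    exact IH (j' : ℕ) hb j' rfl s'
  -- the inner sum at level jf vanishes
  have hmain : ∑ s' : {a : Fin (jf : ℕ) → Fin (Fintype.card K) // ∑ k, (a k : ℕ) ≤ d - 1},
      g ⟨jf, s'⟩ • f ⟨jf, s'⟩ = 0 := by
    have hsigma : ∑ b : B (Fintype.card K) m d, g b • f b
        = ∑ j' : Fin (m+1), ∑ s' : {a : Fin (j' : ℕ) → Fin (Fintype.card K) //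
            ∑ k, (a k : ℕ) ≤ d - 1}, g ⟨j', s'⟩ • f ⟨j', s'⟩ := by
      rw [← Finset.univ_sigma_univ, Finset.sum_sigma]
    rw [hsigma] at hfsum
    have hother : ∀ j' : Fin (m+1), j' ∈ Finset.univ → j' ≠ jf →
        (∑ s' : {a : Fin (j' : ℕ) → Fin (Fintype.card K) // ∑ k, (a k : ℕ) ≤ d - 1},
          g ⟨j', s'⟩ • f ⟨j', s'⟩) = 0 := by
      intro j' _ hne
      rcases lt_or_gt_of_ne (fun h : (j' : ℕ) = (jf : ℕ) => hne (Fin.ext h)) with hlt | hgt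
      · exact Finset.sum_eq_zero (fun s' _ => by rw [hIH ⟨j', s'⟩ hlt, zero_smul])
      · exact Finset.sum_eq_zero (fun s' _ => by rw [hzero_gt ⟨j', s'⟩ hgt, smul_zero])
    calc ∑ s' : {a : Fin (jf : ℕ) → Fin (Fintype.card K) // ∑ k, (a k : ℕ) ≤ d - 1},
          g ⟨jf, s'⟩ • f ⟨jf, s'⟩
        = ∑ j' : Fin (m+1), ∑ s' : {a : Fin (j' : ℕ) → Fin (Fintype.card K) //
            ∑ k, (a k : ℕ) ≤ d - 1}, g ⟨j', s'⟩ • f ⟨j', s'⟩ :=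
          (Finset.sum_eq_single jf hother (fun h => absurd (Finset.mem_univ jf) h)).symm
      _ = 0 := hfsum
  -- identify `f ⟨jf, s'⟩` with a reduced monomial function
  have hfmon : ∀ s' : {a : Fin (jf : ℕ) → Fin (Fintype.card K) // ∑ k, (a k : ℕ) ≤ d - 1},
      f ⟨jf, s'⟩ = fun w : Fin (jf : ℕ) → K => ∏ k, w k ^ ((s'.1 k : ℕ)) := by
    intro s'
    funext w
    show eF K (Fintype.card K) m d ⟨jf, s'⟩ (ext w) = _
    unfold eF
    set F : ℕ → K := fun t =>
      (if h : t < (jf : ℕ) then w ⟨t, h⟩ else if t = (jf : ℕ) then 1 else 0)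
        ^ Ee d (⟨jf, s'⟩ : B (Fintype.card K) m d) t with hF
    have hLHS : ∏ k : Fin (m+1), (ext w).1 k ^ Ee d (⟨jf, s'⟩ : B (Fintype.card K) m d) (k : ℕ)
        = ∏ t ∈ range (m+1), F t := Fin.prod_univ_eq_prod_range F (m+1)
    rw [hLHS]
    rw [prod_split F jf.isLt (fun t ht => by
      rw [hF]
      show _ ^ Ee d (⟨jf, s'⟩ : B (Fintype.card K) m d) t = 1
      rw [Ee_gt _ ht, pow_zero])]
    have hFj : F (jf : ℕ) = 1 := by
      rw [hF]
      show (if h : (jf : ℕ) < (jf : ℕ) then _ else if (jf : ℕ) = (jf : ℕ) then 1 else 0) ^ _ = 1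
      rw [dif_neg (lt_irrefl _), if_pos rfl, one_pow]
    rw [hFj, mul_one, ← Fin.prod_univ_eq_prod_range F (jf : ℕ)]
    apply Finset.prod_congr rfl
    intro k _
    rw [hF]
    show (if h : (k : ℕ) < (jf : ℕ) then w ⟨(k : ℕ), h⟩
        else if (k : ℕ) = (jf : ℕ) then 1 else 0)
        ^ Ee d (⟨jf, s'⟩ : B (Fintype.card K) m d) (k : ℕ) = w k ^ ((s'.1 k : ℕ))
    unfold Ee
    rw [dif_pos k.isLt, dif_pos k.isLt]
  -- extend coefficients to the full family of reduced monomials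
  set G : (Fin (jf : ℕ) → Fin (Fintype.card K)) → K := fun a =>
    if h : (∑ k, (a k : ℕ)) ≤ d - 1 then g ⟨jf, ⟨a, h⟩⟩ else 0 with hG
  have hGsum : ∑ a : Fin (jf : ℕ) → Fin (Fintype.card K),
      G a • (fun w : Fin (jf : ℕ) → K => ∏ k, w k ^ (a k : ℕ)) = 0 := by
    rw [← Finset.sum_filter_add_sum_filter_not Finset.univ
      (fun a : Fin (jf : ℕ) → Fin (Fintype.card K) => (∑ k, (a k : ℕ)) ≤ d - 1)]
    have h2 : ∑ a ∈ Finset.univ.filter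
        (fun a : Fin (jf : ℕ) → Fin (Fintype.card K) => ¬ (∑ k, (a k : ℕ)) ≤ d - 1),
        G a • (fun w : Fin (jf : ℕ) → K => ∏ k, w k ^ (a k : ℕ)) = 0 := by
      apply Finset.sum_eq_zero
      intro a ha
      rw [hG]
      simp only [dif_neg (Finset.mem_filter.mp ha).2]
      rw [zero_smul]
    have h1 : ∑ a ∈ Finset.univ.filter
        (fun a : Fin (jf : ℕ) → Fin (Fintype.card K) => (∑ k, (a k : ℕ)) ≤ d - 1),
        G a • (fun w : Fin (jf : ℕ) → K => ∏ k, w k ^ (a k : ℕ))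
        = ∑ s' : {a : Fin (jf : ℕ) → Fin (Fintype.card K) // ∑ k, (a k : ℕ) ≤ d - 1},
          g ⟨jf, s'⟩ • f ⟨jf, s'⟩ := by
      rw [Finset.sum_subtype
        (p := fun a : Fin (jf : ℕ) → Fin (Fintype.card K) => (∑ k, (a k : ℕ)) ≤ d - 1)
        (Finset.univ.filter
          (fun a : Fin (jf : ℕ) → Fin (Fintype.card K) => (∑ k, (a k : ℕ)) ≤ d - 1))
        (fun a => by simp) (fun a => G a • (fun w : Fin (jf : ℕ) → K => ∏ k, w k ^ (a k : ℕ)))]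
      apply Finset.sum_congr rfl
      intro s' _
      rw [hfmon s', hG]
      simp only [dif_pos s'.2]
    rw [h1, hmain, h2, add_zero]
  have hGzero := Fintype.linearIndependent_iff.mp (monIndep K (jf : ℕ)) G hGsum s0.1
  rw [hG] at hGzero
  simp only [dif_pos s0.2] at hGzero
  exact hGzero

end PRMaux

/-- The dimension of `PRM_q(d,m)` equals `Σ_{i=0}^{m} ρ_q(d−1, i)`, where
`ρ_q(ν,i)` is the number of tuples `(a_1,…,a_i)` with `0 ≤ a_j ≤ q−1` and sum `≤ ν`. -/
theorem PRM_dimension (K : Type) [Field K] [Fintype K] [DecidableEq K]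
    (q : ℕ) (hq : Fintype.card K = q) (m d : ℕ) (hm : 1 ≤ m)
    (hd1 : 1 ≤ d) (hd2 : d ≤ m * (q - 1) + 1) :
    Module.finrank K
      ↥(Submodule.span K {c : {v : Fin (m + 1) → K // IsRep v} → K |
          ∃ F : MvPolynomial (Fin (m + 1)) K, F.IsHomogeneous d ∧
            c = fun p => MvPolynomial.eval p.1 F})
      = ∑ i ∈ Finset.range (m + 1),
          (Finset.univ.filter
            (fun a : Fin i → Fin q => ∑ j, (a j : ℕ) ≤ d - 1)).card := by
  classical
  subst hq
  have hspan : Submodule.span K {c : {v : Fin (m + 1) → K // IsRep v} → K |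
          ∃ F : MvPolynomial (Fin (m + 1)) K, F.IsHomogeneous d ∧
            c = fun p => MvPolynomial.eval p.1 F}
      = Submodule.span K (Set.range (PRMaux.eF K (Fintype.card K) m d)) := by
    apply le_antisymm
    · rw [Submodule.span_le]
      rintro c ⟨F, hFhom, rfl⟩
      have hrepr : (fun p : {v : Fin (m + 1) → K // IsRep v} => MvPolynomial.eval p.1 F)
          = ∑ u ∈ F.support, MvPolynomial.coeff u F •
            (fun p : {v : Fin (m + 1) → K // IsRep v} => ∏ k, p.1 k ^ u k) := by
        funext p
        rw [Finset.sum_apply]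
        conv_lhs => rw [MvPolynomial.as_sum F]
        rw [map_sum]
        apply Finset.sum_congr rfl
        intro u _
        rw [MvPolynomial.eval_monomial, Finsupp.prod_pow]
        simp
      rw [SetLike.mem_coe, hrepr]
      apply Submodule.sum_mem
      intro u hu
      apply Submodule.smul_mem
      have hdeg : Finsupp.degree u = d := by
        by_contra hne
        exact (MvPolynomial.mem_support_iff.mp hu) (hFhom.coeff_eq_zero hne)
      obtain ⟨b, hb⟩ := PRMaux.exists_b K hd1 u hdeg
      have heq : (fun p : {v : Fin (m + 1) → K // IsRep v} => ∏ k, p.1 k ^ u k)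
          = PRMaux.eF K (Fintype.card K) m d b := by
        funext p
        exact hb p.1
      rw [heq]
      exact Submodule.subset_span (Set.mem_range_self b)
    · apply Submodule.span_mono
      rintro c ⟨b, rfl⟩
      refine ⟨MvPolynomial.monomial (Finsupp.equivFunOnFinite.symm
        (fun k : Fin (m+1) => PRMaux.Ee d b (k : ℕ))) 1, ?_, ?_⟩
      · apply MvPolynomial.isHomogeneous_monomial
        have hdeq : Finsupp.degree (Finsupp.equivFunOnFinite.symm
            (fun k : Fin (m+1) => PRMaux.Ee d b (k : ℕ)))
            = ∑ k : Fin (m+1), PRMaux.Ee d b (k : ℕ) := by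
          unfold Finsupp.degree
          exact Finset.sum_subset (Finset.subset_univ _)
            (fun x _ hx => Finsupp.notMem_support_iff.mp hx)
        rw [hdeq, PRMaux.sum_Ee hd1 b]
      · funext p
        rw [MvPolynomial.eval_monomial, Finsupp.prod_pow, one_mul]
        rfl
  rw [hspan, finrank_span_eq_card (PRMaux.eIndep K m d hd1)]
  rw [Fintype.card_sigma]
  rw [← Fin.sum_univ_eq_sum_range (fun i => (Finset.univ.filter
    (fun a : Fin i → Fin (Fintype.card K) => ∑ j, (a j : ℕ) ≤ d - 1)).card) (m+1)]
  apply Finset.sum_congr rfl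
  intro j _
  exact Fintype.card_subtype _
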